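/- Let c > 0, ξ ∈ ℝ, ξ ≠ 0, ε > 0, Δt > 0. The classical (explicit-source) first-order scheme for the Fourier-mode linearised EP system, ρ^{n+1} = ρⁿ − Δt iξ uⁿ, u^{n+1} = uⁿ − Δt iξ c²ρⁿ + Δt iξ φⁿ, −ε²ξ²φⁿ = ρⁿ, has amplification matrix M = [[1, −iΔtξ],[−iΔtξ(c² + 1/(ε²ξ²)), 1]] acting on (ρⁿ, uⁿ), and the eigenvalues of M are 1 ± iΔtξ√(c² + 1/(ε²ξ²)), each of modulus √(1 + Δt²ξ²c² + Δt²/ε²) > 1. Hence the classical scheme is unconditionally unstable for every Δt > 0, with amplification factor at least √(1 + Δt²/ε²). -/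

import Mathlib

open Complex Matrix

/-- The classical explicit Fourier-mode scheme has amplification matrix M whose
eigenvalues 1 ± iΔtξ√(c² + 1/(ε²ξ²)) have modulus √(1 + Δt²ξ²c² + Δt²/ε²) > 1;
hence it is unconditionally unstable, with amplification at least √(1 + Δt²/ε²). -/
theorem classical_scheme_unconditionally_unstable (c ξ ε Δt : ℝ)
    (hc : 0 < c) (hξ : ξ ≠ 0) (hε : 0 < ε) (hΔt : 0 < Δt) :
    let M : Matrix (Fin 2) (Fin 2) ℂ :=
      !![1, -I * Δt * ξ; -I * Δt * ξ * (c ^ 2 + 1 / (ε ^ 2 * ξ ^ 2)), 1]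
    let r : ℝ := Δt * ξ * Real.sqrt (c ^ 2 + 1 / (ε ^ 2 * ξ ^ 2))
    (∀ ρn un φn : ℂ, -(ε : ℂ) ^ 2 * ξ ^ 2 * φn = ρn →
      M.mulVec ![ρn, un] =
        ![ρn - Δt * I * ξ * un,
          un - Δt * I * ξ * c ^ 2 * ρn + Δt * I * ξ * φn]) ∧
    (M - ((1 : ℂ) + r * I) • (1 : Matrix (Fin 2) (Fin 2) ℂ)).det = 0 ∧
    (M - ((1 : ℂ) - r * I) • (1 : Matrix (Fin 2) (Fin 2) ℂ)).det = 0 ∧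
    ‖(1 : ℂ) + r * I‖
      = Real.sqrt (1 + Δt ^ 2 * ξ ^ 2 * c ^ 2 + Δt ^ 2 / ε ^ 2) ∧
    ‖(1 : ℂ) - r * I‖
      = Real.sqrt (1 + Δt ^ 2 * ξ ^ 2 * c ^ 2 + Δt ^ 2 / ε ^ 2) ∧
    1 < ‖(1 : ℂ) + r * I‖ ∧
    Real.sqrt (1 + Δt ^ 2 / ε ^ 2) ≤ ‖(1 : ℂ) + r * I‖ := by
  intro M r
  have hKpos : (0:ℝ) < c ^ 2 + 1 / (ε ^ 2 * ξ ^ 2) := by positivity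
  have hK : (0:ℝ) ≤ c ^ 2 + 1 / (ε ^ 2 * ξ ^ 2) := le_of_lt hKpos
  have hr2 : r ^ 2 = Δt ^ 2 * ξ ^ 2 * (c ^ 2 + 1 / (ε ^ 2 * ξ ^ 2)) := by
    simp only [r, mul_pow, Real.sq_sqrt hK]
  have hr2' : r ^ 2 = Δt ^ 2 * ξ ^ 2 * c ^ 2 + Δt ^ 2 / ε ^ 2 := by
    rw [hr2]; field_simp
  have hr2C : (r : ℂ) ^ 2 = (Δt : ℂ) ^ 2 * ξ ^ 2 * ((c:ℂ) ^ 2 + 1 / ((ε:ℂ) ^ 2 * (ξ:ℂ) ^ 2)) := by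
    have : ((r ^ 2 : ℝ) : ℂ) = ((Δt ^ 2 * ξ ^ 2 * (c ^ 2 + 1 / (ε ^ 2 * ξ ^ 2)) : ℝ) : ℂ) :=
      congrArg _ hr2
    push_cast at this
    exact this
  have habs : ∀ s : ℝ, ‖(1 : ℂ) + s * I‖ = Real.sqrt (1 + s ^ 2) := by
    intro s
    rw [show ((1 : ℂ) + (s:ℂ) * I) = ((1:ℝ) : ℂ) + (s:ℝ) * I by push_cast; ring,
      Complex.norm_def, Complex.normSq_add_mul_I]
    norm_num
  have hsum : 1 + Δt ^ 2 * ξ ^ 2 * c ^ 2 + Δt ^ 2 / ε ^ 2 = 1 + r ^ 2 := by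
    rw [hr2']; ring
  have habs1 : ‖(1 : ℂ) + r * I‖
      = Real.sqrt (1 + Δt ^ 2 * ξ ^ 2 * c ^ 2 + Δt ^ 2 / ε ^ 2) := by
    rw [habs r, hsum]
  have hr2pos : 0 < r ^ 2 := by
    rw [hr2]; positivity
  refine ⟨?_, ?_, ?_, habs1, ?_, ?_, ?_⟩
  · intro ρn un φn hφ
    have hεC : (ε:ℂ) ≠ 0 := by exact_mod_cast hε.ne'
    have hξC : (ξ:ℂ) ≠ 0 := by exact_mod_cast hξ
    funext i
    fin_cases i <;>
      simp [M, Matrix.mulVec, dotProduct, Fin.sum_univ_two]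
    · ring
    · rw [← hφ]
      field_simp [hεC, hξC]
      ring
  · simp only [M, Matrix.det_fin_two, Matrix.sub_apply, Matrix.smul_apply,
      Matrix.one_apply, Matrix.cons_val', Matrix.cons_val_zero, Matrix.cons_val_one,
      Matrix.head_cons, Matrix.empty_val', Matrix.cons_val_fin_one, smul_eq_mul]
    norm_num
    linear_combination (I:ℂ) ^ 2 * hr2C
  · simp only [M, Matrix.det_fin_two, Matrix.sub_apply, Matrix.smul_apply,
      Matrix.one_apply, Matrix.cons_val', Matrix.cons_val_zero, Matrix.cons_val_one,
      Matrix.head_cons, Matrix.empty_val', Matrix.cons_val_fin_one, smul_eq_mul]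
    norm_num
    linear_combination (I:ℂ) ^ 2 * hr2C
  · rw [show (1:ℂ) - (r:ℂ) * I = 1 + ((-r : ℝ) : ℂ) * I by push_cast; ring,
      habs (-r)]
    rw [hsum]; norm_num
  · rw [habs1, hsum]
    refine (Real.lt_sqrt (by norm_num)).mpr ?_
    nlinarith
  · rw [habs1, hsum, hr2']
    apply Real.sqrt_le_sqrt
    nlinarith [sq_nonneg (Δt * ξ * c)]
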